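/- Let T be a tree and L its line graph. Let S_V be a set of vertices of T and S_E a set of edges of T such that every vertex of S_V is incident with some edge of S_E. Then d_T(S_V) ≤ d_L(S_E) + 1. -/

import Mathlib

open scoped Classical
open Finset

noncomputable def steinerDist {V : Type*} (G : SimpleGraph V) (S : Finset V) : ℕ :=
  sInf {m : ℕ | ∃ H : G.Subgraph, H.Connected ∧ ↑S ⊆ H.verts ∧ H.edgeSet.ncard = m}

noncomputable def swk {V : Type*} [Fintype V] (k : ℕ) (G : SimpleGraph V) : ℕ :=
  ∑ S ∈ Finset.powersetCard k (Finset.univ : Finset V), steinerDist G S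

noncomputable def wswk {V : Type*} [Fintype V] (k : ℕ) (G : SimpleGraph V) (c : V → ℕ) : ℕ :=
  ∑ S ∈ Finset.powersetCard k (Finset.univ : Finset (Σ v : V, Fin (c v))), steinerDist G (S.image Sigma.fst)

/-- In a connected graph on a finite vertex type, the number of vertices is at most
the number of edges plus one. -/
lemma conn_card_aux {W : Type*} [Fintype W] (G : SimpleGraph W) (h : G.Connected) :
    Fintype.card W ≤ G.edgeSet.ncard + 1 := by
  obtain ⟨r⟩ := h.nonempty
  have key : ∀ w : W, w ≠ r → ∃ x, G.Adj w x ∧ G.dist x r + 1 = G.dist w r := by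
    intro w hw
    obtain ⟨p, hp⟩ := h.exists_walk_length_eq_dist w r
    cases p with
    | nil => exact absurd rfl hw
    | @cons _ x _ hadj q =>
      refine ⟨x, hadj, ?_⟩
      have h1 : G.dist x r ≤ q.length := SimpleGraph.dist_le q
      have h2 : G.dist w r ≤ G.dist w x + G.dist x r := h.dist_triangle
      have h3 : G.dist w x ≤ 1 := by simpa using SimpleGraph.dist_le hadj.toWalk
      have h4 : q.length + 1 = G.dist w r := by simpa using hp
      omega
  set f : W → Sym2 W := fun w => if hw : w ≠ r then s(w, (key w hw).choose) else s(r, r) with hf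
  have hinj : Set.InjOn f ({r}ᶜ : Set W) := by
    intro a ha b hb hab
    simp only [Set.mem_compl_iff, Set.mem_singleton_iff] at ha hb
    rw [hf] at hab
    simp only [dif_pos ha, dif_pos hb] at hab
    rw [Sym2.eq_iff] at hab
    rcases hab with ⟨h1, _⟩ | ⟨h1, h2⟩
    · exact h1
    · exfalso
      have da := (key a ha).choose_spec.2
      have db := (key b hb).choose_spec.2
      rw [h2] at da
      rw [← h1] at db
      omega
  have hsub : f '' ({r}ᶜ : Set W) ⊆ G.edgeSet := by
    rintro x ⟨a, ha, rfl⟩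
    simp only [Set.mem_compl_iff, Set.mem_singleton_iff] at ha
    rw [hf]
    simp only [dif_pos ha]
    exact (key a ha).choose_spec.1
  have h1 : (f '' ({r}ᶜ : Set W)).ncard = ({r}ᶜ : Set W).ncard :=
    Set.ncard_image_of_injOn hinj
  have h2 : (f '' ({r}ᶜ : Set W)).ncard ≤ G.edgeSet.ncard :=
    Set.ncard_le_ncard hsub (Set.toFinite _)
  have h3 : ({r} : Set W).ncard + ({r}ᶜ : Set W).ncard = Nat.card W :=
    Set.ncard_add_ncard_compl _
  rw [Set.ncard_singleton, Nat.card_eq_fintype_card] at h3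
  omega

/-- If two edges of `T` contain the endpoints of a walk in `T`, they are reachable
from each other in the line graph. -/
lemma lg_reach {V : Type*} (T : SimpleGraph V) {u v : V} (p : T.Walk u v)
    (e f : T.edgeSet) (he : u ∈ (e : Sym2 V)) (hf : v ∈ (f : Sym2 V)) :
    T.lineGraph.Reachable e f := by
  induction p generalizing e with
  | nil =>
    by_cases h : e = f
    · exact h ▸ SimpleGraph.Reachable.refl e
    · exact (SimpleGraph.lineGraph_adj_iff_exists.mpr ⟨h, _, he, hf⟩).reachable
  | @cons u u' w hadj q ih =>
    set e' : T.edgeSet := ⟨s(u, u'), T.mem_edgeSet.mpr hadj⟩ with he'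
    have h2 : T.lineGraph.Reachable e' f := ih e' (Sym2.mem_mk_right u u') hf
    refine SimpleGraph.Reachable.trans ?_ h2
    by_cases h : e = e'
    · exact h ▸ SimpleGraph.Reachable.refl e
    · exact (SimpleGraph.lineGraph_adj_iff_exists.mpr
        ⟨h, u, he, Sym2.mem_mk_left u u'⟩).reachable

/-- From a connected subgraph of the line graph, build a connected subgraph of `T`
whose edges are exactly the vertices of the given subgraph. -/
lemma key_sub {V : Type*} (T : SimpleGraph V) (H : T.lineGraph.Subgraph)
    (hH : H.Connected) :
    ∃ K : T.Subgraph, K.Connected ∧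
      (∀ v : V, (∃ e ∈ H.verts, v ∈ (e : Sym2 V)) → v ∈ K.verts) ∧
      K.edgeSet.ncard = H.verts.ncard := by
  set K : T.Subgraph :=
    { verts := {v | ∃ e ∈ H.verts, v ∈ (e : Sym2 V)}
      Adj := fun a b => ∃ e ∈ H.verts, (e : Sym2 V) = s(a, b)
      adj_sub := by
        rintro a b ⟨e, he, hev⟩
        exact T.mem_edgeSet.mp (hev ▸ e.2)
      edge_vert := by
        rintro a b ⟨e, he, hev⟩
        exact ⟨e, he, by rw [hev]; exact Sym2.mem_mk_left a b⟩
      symm := by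
        constructor
        rintro a b ⟨e, he, hev⟩
        exact ⟨e, he, by rw [hev, Sym2.eq_swap]⟩ } with hK
  have reach_in_edge : ∀ (e : T.edgeSet) (he : e ∈ H.verts) (a b : V)
      (ha : a ∈ (e : Sym2 V)) (hb : b ∈ (e : Sym2 V)),
      K.coe.Reachable ⟨a, ⟨e, he, ha⟩⟩ ⟨b, ⟨e, he, hb⟩⟩ := by
    intro e he a b ha hb
    by_cases hab : a = b
    · cases hab
      exact SimpleGraph.Reachable.refl _
    · have hadj : K.Adj a b := ⟨e, he, (Sym2.mem_and_mem_iff hab).mp ⟨ha, hb⟩⟩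
      exact SimpleGraph.Adj.reachable hadj
  have claim : ∀ (E F : H.verts) (p : H.coe.Walk E F) (a b : V)
      (ha : a ∈ ((E : T.edgeSet) : Sym2 V)) (hb : b ∈ ((F : T.edgeSet) : Sym2 V)),
      K.coe.Reachable ⟨a, ⟨E, E.2, ha⟩⟩ ⟨b, ⟨F, F.2, hb⟩⟩ := by
    intro E F p
    induction p with
    | nil => intro a b ha hb; exact reach_in_edge _ (Subtype.coe_prop _) a b ha hb
    | @cons E E' F hadj q ih =>
      intro a b ha hb
      have hL : T.lineGraph.Adj (E : T.edgeSet) (E' : T.edgeSet) := H.adj_sub hadj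
      obtain ⟨hne, w, hw1, hw2⟩ := SimpleGraph.lineGraph_adj_iff_exists.mp hL
      exact (reach_in_edge _ E.2 a w ha hw1).trans (ih w b hw2 hb)
  refine ⟨K, ?_, fun v hv => hv, ?_⟩
  · rw [SimpleGraph.Subgraph.connected_iff]
    constructor
    · rw [SimpleGraph.Subgraph.preconnected_iff]
      rintro ⟨a, e, he, ha⟩ ⟨b, f, hf, hb⟩
      obtain ⟨p⟩ := hH.coe.preconnected ⟨e, he⟩ ⟨f, hf⟩
      exact claim ⟨e, he⟩ ⟨f, hf⟩ p a b ha hb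
    · obtain ⟨e, he⟩ := hH.nonempty
      exact ⟨(e : Sym2 V).out.1, e, he, Sym2.out_fst_mem _⟩
  · have : K.edgeSet = Subtype.val '' H.verts := by
      refine Set.ext fun x => ?_
      induction x using Sym2.ind with
      | _ a b =>
        rw [SimpleGraph.Subgraph.mem_edgeSet]
        constructor
        · rintro ⟨e, he, hev⟩
          exact ⟨e, he, hev⟩
        · rintro ⟨e, he, hev⟩
          exact ⟨e, he, hev⟩
    rw [this]
    exact Set.ncard_image_of_injective _ Subtype.val_injective

/-- if every vertex of S_V is incident with some edge of S_E, then
d_T(S_V) ≤ d_L(S_E) + 1, where L is the line graph of the tree T. -/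
theorem steiner_dist_line_graph {V : Type*} [Fintype V] (T : SimpleGraph V)
    (hT : T.IsTree) (SV : Finset V) (SE : Finset T.edgeSet) (hSE : SE.Nonempty)
    (hcov : ∀ v ∈ SV, ∃ e ∈ SE, v ∈ (e : Sym2 V)) :
    steinerDist T SV ≤ steinerDist T.lineGraph SE + 1 := by
  classical
  obtain ⟨e0, he0⟩ := hSE
  -- the line graph is connected
  have hLconn : T.lineGraph.Connected := by
    rw [SimpleGraph.connected_iff]
    refine ⟨?_, ⟨e0⟩⟩
    intro e f
    have ha : (e : Sym2 V).out.1 ∈ (e : Sym2 V) := Sym2.out_fst_mem _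
    have hb : (f : Sym2 V).out.1 ∈ (f : Sym2 V) := Sym2.out_fst_mem _
    exact (hT.isConnected.preconnected _ _).elim fun p => lg_reach T p e f ha hb
  -- the defining set for the Steiner distance in the line graph is nonempty
  have hne : {m : ℕ | ∃ H : T.lineGraph.Subgraph, H.Connected ∧ ↑SE ⊆ H.verts ∧
      H.edgeSet.ncard = m}.Nonempty := by
    refine ⟨(⊤ : T.lineGraph.Subgraph).edgeSet.ncard, ⊤, ?_, by simp, rfl⟩
    rw [SimpleGraph.Subgraph.connected_iff']
    rw [SimpleGraph.connected_iff]
    refine ⟨?_, ⟨⟨e0, trivial⟩⟩⟩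
    intro u v
    exact (hLconn.preconnected (u : T.edgeSet) (v : T.edgeSet)).map
      SimpleGraph.Subgraph.topIso.symm.toHom
  obtain ⟨H, hHconn, hHsub, hHcard⟩ := Nat.sInf_mem hne
  obtain ⟨K, hKconn, hKverts, hKcard⟩ := key_sub T H hHconn
  -- count: H.verts.ncard ≤ H.edgeSet.ncard + 1
  have hcount : H.verts.ncard ≤ H.edgeSet.ncard + 1 := by
    have hc := conn_card_aux H.coe hHconn.coe
    have hv : Fintype.card H.verts = H.verts.ncard := by
      rw [← Nat.card_coe_set_eq, Nat.card_eq_fintype_card]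
    have hhe : H.coe.edgeSet.ncard = H.edgeSet.ncard := by
      rw [← SimpleGraph.Subgraph.image_coe_edgeSet_coe]
      exact (Set.ncard_image_of_injective _ (Sym2.map.injective Subtype.val_injective)).symm
    rw [hv, hhe] at hc
    exact hc
  have hKle : steinerDist T SV ≤ K.edgeSet.ncard := by
    apply Nat.sInf_le
    refine ⟨K, hKconn, ?_, rfl⟩
    intro v hv
    obtain ⟨e, he, hve⟩ := hcov v (by simpa using hv)
    exact hKverts v ⟨e, hHsub he, hve⟩
  calc steinerDist T SV ≤ K.edgeSet.ncard := hKle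
    _ = H.verts.ncard := hKcard
    _ ≤ H.edgeSet.ncard + 1 := hcount
    _ = steinerDist T.lineGraph SE + 1 := by rw [hHcard]; rfl
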